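/- Let S be a finite set of proper morphisms and let x ∈ A^ℕ be a primitive S-adic sequence generated by a sequence (σ_i : A_{i+1} → A_i* ; i ∈ ℕ) ∈ S^ℕ and a letter a. Then x is linearly recurrent, and consequently the subshift generated by x is linearly recurrent. -/

import Mathlib

namespace DurandLR

variable {A B : Type*}

/-- `u` occurs at position `i` in the one-sided sequence `x`. -/
def OccursAt (x : ℕ → A) (u : List A) (i : ℕ) : Prop :=
  ∀ k : Fin u.length, x (i + (k : ℕ)) = u.get k

/-- `u` occurs (somewhere) in the one-sided sequence `x`. -/
def Occurs (x : ℕ → A) (u : List A) : Prop := ∃ i, OccursAt x u i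

/-- `u` occurs at position `i` in the two-sided sequence `x`. -/
def OccursAtZ (x : ℤ → A) (u : List A) (i : ℤ) : Prop :=
  ∀ k : Fin u.length, x (i + (k : ℕ)) = u.get k

def OccursZ (x : ℤ → A) (u : List A) : Prop := ∃ i, OccursAtZ x u i

/-- The word `u` has exactly `m` occurrences in the finite word `w`. -/
def OccCountEq (u w : List A) (m : ℕ) : Prop :=
  {i : ℕ | u <+: w.drop i}.ncard = m

/-- `w` is a return word to `u` in the one-sided sequence `x`: `wu` occurs in `x`,
`u` is a prefix of `wu` and `u` has exactly two occurrences in `wu`. -/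
def IsReturnWord (x : ℕ → A) (u w : List A) : Prop :=
  Occurs x (w ++ u) ∧ u <+: (w ++ u) ∧ OccCountEq u (w ++ u) 2

/-- `w` is a return word to `u` in the two-sided sequence `x`. -/
def IsReturnWordZ (x : ℤ → A) (u w : List A) : Prop :=
  OccursZ x (w ++ u) ∧ u <+: (w ++ u) ∧ OccCountEq u (w ++ u) 2

/-- `x` is uniformly recurrent: every word occurring in `x` occurs with bounded gaps. -/
def UniformlyRecurrent (x : ℕ → A) : Prop :=
  ∀ u, Occurs x u → ∃ M : ℕ, ∀ i : ℕ, ∃ j, i ≤ j ∧ j < i + M ∧ OccursAt x u j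

def UniformlyRecurrentZ (x : ℤ → A) : Prop :=
  ∀ u, OccursZ x u → ∃ M : ℕ, ∀ i : ℤ, ∃ j : ℤ, i ≤ j ∧ j < i + M ∧ OccursAtZ x u j

/-- `x` is linearly recurrent with constant `K`. -/
def LinearlyRecurrentWith (x : ℕ → A) (K : ℕ) : Prop :=
  UniformlyRecurrent x ∧ ∀ u w, IsReturnWord x u w → w.length ≤ K * u.length

def LinearlyRecurrent (x : ℕ → A) : Prop := ∃ K, LinearlyRecurrentWith x K

def LinearlyRecurrentZ (x : ℤ → A) : Prop :=
  UniformlyRecurrentZ x ∧ ∃ K : ℕ, ∀ u w, IsReturnWordZ x u w → w.length ≤ K * u.length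

/-- The subshift generated by a two-sided sequence `x` : all `z` whose finite subwords
occur in `x`. -/
def SubshiftGenZ (x : ℤ → A) : Set (ℤ → A) := {z | ∀ u, OccursZ z u → OccursZ x u}

/-- The subshift generated by a one-sided sequence `x`. -/
def SubshiftGen (x : ℕ → A) : Set (ℤ → A) := {z | ∀ u, OccursZ z u → Occurs x u}

/-- A minimal subshift: nonempty and every element generates it. -/
def IsMinimalSubshift (X : Set (ℤ → A)) : Prop :=
  X.Nonempty ∧ ∀ z ∈ X, X = SubshiftGenZ z

/-- A linearly recurrent subshift: minimal and containing an LR sequence. -/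
def IsLRSubshift (X : Set (ℤ → A)) : Prop :=
  IsMinimalSubshift X ∧ ∃ x ∈ X, LinearlyRecurrentZ x

def IsPeriodic (z : ℤ → A) : Prop := ∃ p : ℕ, 0 < p ∧ ∀ n : ℤ, z (n + p) = z n

/-- Image of a finite word under a morphism (substitution). -/
def wordMap (σ : A → List B) : List A → List B
  | [] => []
  | a :: u => σ a ++ wordMap σ u

/-- Composition of two morphisms: `compM σ τ = σ ∘ τ`. -/
def compM (σ τ : A → List A) : A → List A := fun b => wordMap σ (τ b)

/-- Iterate of a morphism: `powM σ n = σ^n`. -/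
def powM (σ : A → List A) : ℕ → A → List A
  | 0 => fun b => [b]
  | n + 1 => compM σ (powM σ n)

/-- `chain σ r n = σ_r ∘ σ_{r+1} ∘ ⋯ ∘ σ_{r+n-1}` (the empty composition for `n = 0`). -/
def chain (σ : ℕ → A → List A) (r : ℕ) : ℕ → A → List A
  | 0 => fun b => [b]
  | n + 1 => fun b => wordMap (chain σ r n) (σ (r + n) b)

/-- The periodic infinite sequence `www⋯` obtained by repeating the word `w`
(with a default letter for the degenerate empty case). -/
def repSeq (w : List A) (d : A) : ℕ → A := fun i => w.getD (i % w.length) d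

/-- The prefix of length `n` of the sequence `x`, as a word. -/
def seqTake (x : ℕ → A) (n : ℕ) : List A := (List.range n).map x

/-- `y` is the image of the infinite sequence `z` under the morphism `σ`:
the image of every prefix of `z` is a prefix of `y`. -/
def IsSeqImage (σ : A → List B) (z : ℕ → A) (y : ℕ → B) : Prop :=
  ∀ n, seqTake y (wordMap σ (seqTake z n)).length = wordMap σ (seqTake z n)

/-- `σ_0 σ_1 ⋯ σ_n (aaa⋯)` converges to `x` in the product topology, where the `n`-th
approximation is the periodic sequence obtained by repeating the word `W n`. -/
def ConvergesTo (W : ℕ → List A) (d : A) (x : ℕ → A) : Prop :=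
  ∀ m, ∃ N, ∀ n ≥ N, repSeq (W n) d m = x m

/-- A proper morphism: all images begin with the same letter and end with the same letter. -/
def ProperMorphism (σ : A → List A) : Prop :=
  ∃ l r : A, ∀ b, (σ b).head? = some l ∧ (σ b).getLast? = some r

/-- Primitivity with constant `s₀` of a directive sequence of morphisms
`σ_n : A_{n+1} → A_n^*`: every `b ∈ A_r` occurs in `σ_{r+1} ⋯ σ_{r+s₀} (c)`
for every `c ∈ A_{r+s₀+1}`. -/
def PrimitiveWith (σ : ℕ → A → List A) (Aseq : ℕ → Set A) (s0 : ℕ) : Prop :=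
  ∀ r : ℕ, ∀ b ∈ Aseq r, ∀ c ∈ Aseq (r + s0 + 1), b ∈ chain σ (r + 1) s0 c

/-- The data of an S-adic system: `a` belongs to every alphabet and
`σ_n` maps `A_{n+1}` into words over `A_n`. -/
def SAdicSystem (σ : ℕ → A → List A) (Aseq : ℕ → Set A) (a : A) : Prop :=
  (∀ n, a ∈ Aseq n) ∧ (∀ n, ∀ b ∈ Aseq (n + 1), ∀ c ∈ σ n b, c ∈ Aseq n)

/-- `x` is the S-adic sequence generated by the directive sequence `σ` and letter `a`:
`σ_0 σ_1 ⋯ σ_n (aaa⋯)` converges to `x`. -/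
def GeneratesSAdic (σ : ℕ → A → List A) (Aseq : ℕ → Set A) (a : A) (x : ℕ → A) : Prop :=
  SAdicSystem σ Aseq a ∧ ConvergesTo (fun n => chain σ 0 (n + 1) a) a x

/-- The complexity function `p_x(n)`: the number of distinct words of length `n`
occurring in `x`. -/
noncomputable def complexity (x : ℕ → A) (n : ℕ) : ℕ := {u : List A | u.length = n ∧ Occurs x u}.ncard

/-- Any two successive occurrences of `u` in `x` differ by at most `M`. -/
def GapsBoundedBy (x : ℕ → A) (u : List A) (M : ℕ) : Prop :=
  ∀ i j, OccursAt x u i → OccursAt x u j → i < j →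
    (∀ k, i < k → k < j → ¬ OccursAt x u k) → j - i ≤ M

/-- The finite word `x_{[p,q)}` of a two-sided sequence. -/
def zSeg (x : ℤ → A) (p q : ℤ) : List A := (List.range (q - p).toNat).map fun t => x (p + t)

/-- `w` is a return word to `u.v` in the two-sided sequence `x`: there are two
consecutive occurrences `j < k` of `uv` in `x` with `w = x_{[j+|u|, k+|u|)}`. -/
def IsReturnWordUV (x : ℤ → A) (u v w : List A) : Prop :=
  ∃ j k : ℤ, OccursAtZ x (u ++ v) j ∧ OccursAtZ x (u ++ v) k ∧ j < k ∧
    (∀ i : ℤ, j < i → i < k → ¬ OccursAtZ x (u ++ v) i) ∧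
    w = zSeg x (j + u.length) (k + u.length)

/-- The substitution `σ` on `{a,b,c} = {0,1,2}`: `σ(a)=acb`, `σ(b)=bab`, `σ(c)=cbc`. -/
def sigma3 : Fin 3 → List (Fin 3) := ![[0, 2, 1], [1, 0, 1], [2, 1, 2]]

/-- The substitution `τ` on `{a,b,c} = {0,1,2}`: `τ(a)=abc`, `τ(b)=acb`, `τ(c)=aac`. -/
def tau3 : Fin 3 → List (Fin 3) := ![[0, 1, 2], [0, 2, 1], [0, 0, 2]]

/-- `rho n = σ τ σ² τ ⋯ σⁿ τ` (identity for `n = 0`). -/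
def rho : ℕ → Fin 3 → List (Fin 3)
  | 0 => fun b => [b]
  | n + 1 => compM (rho n) (compM (powM sigma3 (n + 1)) tau3)

/-- `psi n l = σ^{n+2} τ σ^{n+3} τ ⋯ σ^{n+l+1} τ` (identity for `l = 0`). -/
def psi (n : ℕ) : ℕ → Fin 3 → List (Fin 3)
  | 0 => fun b => [b]
  | l + 1 => compM (psi n l) (compM (powM sigma3 (n + 2 + l)) tau3)

/-- The Sturmian substitution `τ` on `{0,1}`: `τ(0)=0`, `τ(1)=10`. -/
def tau2 : Fin 2 → List (Fin 2) := ![[0], [1, 0]]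

/-- The Sturmian substitution `σ` on `{0,1}`: `σ(0)=01`, `σ(1)=1`. -/
def sigma2 : Fin 2 → List (Fin 2) := ![[0, 1], [1]]

/-- `xi i k = τ^{i₁} σ^{i₂} τ^{i₃} ⋯ τ^{i_{2k-1}} σ^{i_{2k}}` (identity for `k = 0`). -/
def xi (i : ℕ → ℕ) : ℕ → Fin 2 → List (Fin 2)
  | 0 => fun b => [b]
  | k + 1 => compM (xi i k) (compM (powM tau2 (i (2 * k + 1))) (powM sigma2 (i (2 * k + 2))))

/-- `a : ℕ → ℕ` gives (from index 1 on) the continued fraction expansion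
`α = [0; a₁, a₂, a₃, …]`, expressed through the Gauss map. -/
def IsCFExpansion (α : ℝ) (a : ℕ → ℕ) : Prop :=
  ∃ β : ℕ → ℝ, β 0 = α ∧ ∀ n : ℕ,
    0 < β n ∧ β n < 1 ∧ (a (n + 1) : ℤ) = ⌊1 / β n⌋ ∧ β (n + 1) = 1 / β n - ⌊1 / β n⌋

/-! ### List and `wordMap` infrastructure -/

theorem wordMap_nil (g : A → List B) : wordMap g [] = [] := rfl

theorem wordMap_cons (g : A → List B) (b : A) (v : List A) :
    wordMap g (b :: v) = g b ++ wordMap g v := rfl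

theorem wordMap_append (g : A → List B) (v w : List A) :
    wordMap g (v ++ w) = wordMap g v ++ wordMap g w := by
  induction v with
  | nil => simp [wordMap]
  | cons b v ih => simp [wordMap_cons, ih]

theorem wordMap_id (v : List A) : wordMap (fun b => [b]) v = v := by
  induction v with
  | nil => rfl
  | cons b v ih => simp [wordMap_cons, ih]

theorem wordMap_singleton (g : A → List B) (b : A) : wordMap g [b] = g b := by
  simp [wordMap_cons, wordMap_nil]

theorem wordMap_wordMap (g : B → List A) (h : A → List B) (v : List A) :
    wordMap g (wordMap h v) = wordMap (fun b => wordMap g (h b)) v := by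
  induction v with
  | nil => rfl
  | cons b v ih => simp [wordMap_cons, wordMap_append, ih]

theorem length_wordMap_le (g : A → List B) (v : List A) (M : ℕ)
    (h : ∀ b ∈ v, (g b).length ≤ M) : (wordMap g v).length ≤ v.length * M := by
  induction v with
  | nil => simp [wordMap]
  | cons b v ih =>
    simp only [wordMap_cons, List.length_append, List.length_cons]
    have h1 := h b (by simp)
    have h2 := ih (fun c hc => h c (by simp [hc]))
    nlinarith

/-- `u` is a factor (subword) of `w`. -/
def Fac (u w : List A) : Prop := ∃ v₁ v₂, w = v₁ ++ u ++ v₂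

theorem Fac.append_left {u w : List A} (h : Fac u w) (z : List A) : Fac u (z ++ w) := by
  obtain ⟨v₁, v₂, rfl⟩ := h
  exact ⟨z ++ v₁, v₂, by simp⟩

theorem Fac.append_right {u w : List A} (h : Fac u w) (z : List A) : Fac u (w ++ z) := by
  obtain ⟨v₁, v₂, rfl⟩ := h
  exact ⟨v₁, v₂ ++ z, by simp⟩

theorem Fac.refl (u : List A) : Fac u u := ⟨[], [], by simp⟩

theorem Fac.trans {u v w : List A} (h1 : Fac u v) (h2 : Fac v w) : Fac u w := by
  obtain ⟨a₁, a₂, rfl⟩ := h1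
  obtain ⟨b₁, b₂, rfl⟩ := h2
  exact ⟨b₁ ++ a₁, a₂ ++ b₂, by simp⟩

theorem fac_of_mem {b : A} {v : List A} (h : b ∈ v) : Fac [b] v := by
  obtain ⟨s, t, rfl⟩ := List.append_of_mem h
  exact ⟨s, t, by simp⟩

theorem Fac.wordMap {u v : List A} (g : A → List B) (h : Fac u v) :
    Fac (wordMap g u) (wordMap g v) := by
  obtain ⟨v₁, v₂, rfl⟩ := h
  exact ⟨DurandLR.wordMap g v₁, DurandLR.wordMap g v₂, by simp [wordMap_append]⟩

theorem fac_of_mem_image (g : A → List B) {b : A} {v : List A} (h : b ∈ v) :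
    Fac (g b) (wordMap g v) := by
  have := (fac_of_mem h).wordMap g
  rwa [wordMap_singleton] at this

theorem Fac.length_le {u w : List A} (h : Fac u w) : u.length ≤ w.length := by
  obtain ⟨v₁, v₂, rfl⟩ := h
  simp; omega

theorem fac_of_prefix_drop {u w : List A} {p : ℕ} (h : u <+: w.drop p) : Fac u w := by
  obtain ⟨t, ht⟩ := h
  exact ⟨w.take p, t, by rw [List.append_assoc, ht, List.take_append_drop]⟩

theorem fac_split {u v w : List A} (h : Fac u (v ++ w)) :
    Fac u v ∨ Fac u w ∨
      ∃ s t, u = s ++ t ∧ s ≠ [] ∧ t ≠ [] ∧ s <:+ v ∧ t <+: w := by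
  obtain ⟨v₁, v₂, e⟩ := h
  rw [List.append_assoc] at e
  rcases List.append_eq_append_iff.1 e with ⟨a', _, ha2⟩ | ⟨c', hc1, hc2⟩
  · exact Or.inr (Or.inl ⟨a', v₂, by rw [ha2, List.append_assoc]⟩)
  · rcases List.append_eq_append_iff.1 hc2 with ⟨a', ha1, _⟩ | ⟨c'', hu, hw⟩
    · exact Or.inl ⟨v₁, a', by rw [hc1, ha1, List.append_assoc]⟩
    · rcases eq_or_ne c' [] with rfl | hs
      · exact Or.inr (Or.inl ⟨[], v₂, by rw [List.nil_append] at hu; rw [hw, hu]; simp⟩)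
      rcases eq_or_ne c'' [] with rfl | ht
      · exact Or.inl ⟨v₁, [], by rw [List.append_nil] at hu; rw [hc1, hu]; simp⟩
      · exact Or.inr (Or.inr ⟨c', c'', hu, hs, ht, ⟨v₁, hc1.symm⟩, ⟨v₂, hw.symm⟩⟩)
/-! ### Two-block covering, adjacency classification, syndeticity -/

theorem eq_nil_of_fac_nil {u : List A} (h : Fac u ([] : List A)) : u = [] := by
  obtain ⟨v₁, v₂, e⟩ := h
  have := congrArg List.length e
  simp at this
  exact List.length_eq_zero_iff.1 (by omega)

theorem twoblock (g : A → List A) :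
    ∀ (V : List A) (u : List A), u ≠ [] → (∀ b ∈ V, u.length ≤ (g b).length) →
    Fac u (wordMap g V) →
    (∃ b ∈ V, Fac u (g b)) ∨ ∃ d e, Fac [d, e] V ∧ Fac u (g d ++ g e) := by
  intro V
  induction V with
  | nil =>
    intro u hu _ hf
    exact absurd (eq_nil_of_fac_nil hf) hu
  | cons b V' ih =>
    intro u hu hlen hf
    rw [wordMap_cons] at hf
    rcases fac_split hf with h | h | ⟨s, t, hst, hs, ht, hsv, htw⟩
    · exact Or.inl ⟨b, by simp, h⟩
    · rcases ih u hu (fun c hc => hlen c (by simp [hc])) h with ⟨b', hb', hb2⟩ | ⟨d, e, h1, h2⟩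
      · exact Or.inl ⟨b', by simp [hb'], hb2⟩
      · exact Or.inr ⟨d, e, by simpa using h1.append_left [b], h2⟩
    · -- straddle
      rcases V' with _ | ⟨b', V''⟩
      · exact absurd (by simpa [wordMap] using htw : t = []) ht
      have hlt : t.length ≤ (g b').length := by
        have h1 : u.length ≤ (g b').length := hlen b' (by simp)
        have h2 : 1 ≤ s.length := List.length_pos_iff.2 hs
        have := congrArg List.length hst
        simp at this
        omega
      have htb' : t <+: g b' := by
        rw [wordMap_cons] at htw
        exact List.prefix_of_prefix_length_le htw (List.prefix_append _ _) hlt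
      obtain ⟨z, hz⟩ := hsv
      obtain ⟨z', hz'⟩ := htb'
      refine Or.inr ⟨b, b', ⟨[], V'', by simp⟩, ⟨z, z', ?_⟩⟩
      rw [← hz, ← hz', hst]
      simp

theorem adjclass (σ : A → List A) (hne : ∀ f, σ f ≠ []) :
    ∀ (V : List A) (d e : A), Fac [d, e] (wordMap σ V) →
    (∃ f ∈ V, Fac [d, e] (σ f)) ∨
      ((∃ f ∈ V, (σ f).getLast? = some d) ∧ (∃ f ∈ V, (σ f).head? = some e)) := by
  intro V
  induction V with
  | nil =>
    intro d e hf
    have := hf.length_le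
    simp [wordMap] at this
  | cons f V' ih =>
    intro d e hf
    rw [wordMap_cons] at hf
    rcases fac_split hf with h | h | ⟨s, t, hst, hs, ht, hsv, htw⟩
    · exact Or.inl ⟨f, by simp, h⟩
    · rcases ih d e h with ⟨f', hf', h2⟩ | ⟨⟨f1, hf1, h1⟩, ⟨f2, hf2, h2⟩⟩
      · exact Or.inl ⟨f', by simp [hf'], h2⟩
      · exact Or.inr ⟨⟨f1, by simp [hf1], h1⟩, ⟨f2, by simp [hf2], h2⟩⟩
    · -- straddle : s = [d], t = [e]
      have hse : s = [d] ∧ t = [e] := by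
        rcases s with _ | ⟨sd, s'⟩
        · exact absurd rfl hs
        rcases s' with _ | ⟨sd2, s''⟩
        · rcases t with _ | ⟨td, t'⟩
          · exact absurd rfl ht
          · have : d = sd ∧ e = td ∧ t' = [] := by
              have := hst
              simp at this
              tauto
            obtain ⟨rfl, rfl, rfl⟩ := this
            exact ⟨rfl, rfl⟩
        · have h2 : 1 ≤ t.length := List.length_pos_iff.2 ht
          have := congrArg List.length hst
          simp only [List.length_cons, List.length_append, List.length_nil] at this
          omega
      obtain ⟨rfl, rfl⟩ := hse
      refine Or.inr ⟨⟨f, by simp, ?_⟩, ?_⟩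
      · obtain ⟨z, hz⟩ := hsv
        rw [← hz]
        simp
      · rcases V' with _ | ⟨f', V''⟩
        · exact absurd (by simpa [wordMap] using htw : ([e] : List A) = []) ht
        obtain ⟨c, cs, hc⟩ := List.exists_cons_of_ne_nil (hne f')
        obtain ⟨z', hz'⟩ := htw
        rw [wordMap_cons, hc] at hz'
        simp only [List.cons_append, List.singleton_append, List.cons.injEq] at hz'
        exact ⟨f', by simp, by rw [hc]; simp [hz'.1]⟩

theorem syn (g : A → List A) (u : List A) (P : ℕ) (hP : 1 ≤ P) :
    ∀ (V : List A), (∀ b ∈ V, 1 ≤ (g b).length ∧ (g b).length ≤ P) →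
    (∀ b ∈ V, ∀ b' ∈ V, Fac u (g b ++ g b')) →
    ∀ i, i + 3 * P ≤ (wordMap g V).length →
    ∃ j, i ≤ j ∧ j + u.length ≤ i + 3 * P ∧ u <+: (wordMap g V).drop j := by
  intro V
  induction V with
  | nil =>
    intro _ _ i hi
    simp [wordMap] at hi
    omega
  | cons b V' ih =>
    intro hblk hjun i hi
    rw [wordMap_cons, List.length_append] at hi
    rcases le_or_gt (g b).length i with hbi | hbi
    · obtain ⟨j', h1, h2, h3⟩ := ih (fun c hc => hblk c (by simp [hc]))
        (fun c hc c' hc' => hjun c (by simp [hc]) c' (by simp [hc'])) (i - (g b).length)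
        (by omega)
      refine ⟨(g b).length + j', by omega, by omega, ?_⟩
      rw [wordMap_cons, List.drop_length_add_append]
      exact h3
    · rcases V' with _ | ⟨b', V''⟩
      · have := hblk b (by simp)
        simp [wordMap] at hi
        omega
      rcases V'' with _ | ⟨b'', V'''⟩
      · have h1 := hblk b (by simp)
        have h2 := hblk b' (by simp)
        simp [wordMap] at hi
        omega
      obtain ⟨z, z', hz⟩ := hjun b' (by simp) b'' (by simp)
      have hlenz := congrArg List.length hz
      simp at hlenz
      have hb := hblk b (by simp)
      have hb' := hblk b' (by simp)
      have hb'' := hblk b'' (by simp)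
      refine ⟨(g b).length + z.length, by omega, by omega, ?_⟩
      have hre : wordMap g (b :: b' :: b'' :: V''') =
          g b ++ (z ++ (u ++ (z' ++ wordMap g V'''))) := by
        rw [wordMap_cons, wordMap_cons, wordMap_cons, ← List.append_assoc (g b') (g b''), hz]
        simp
      rw [hre, List.drop_length_add_append, List.drop_left]
      exact List.prefix_append u _
/-! ### `chain` infrastructure -/

theorem mem_wordMap {g : A → List B} {v : List A} {c : B} :
    c ∈ wordMap g v ↔ ∃ d ∈ v, c ∈ g d := by
  induction v with
  | nil => simp [wordMap]
  | cons b v ih => simp [wordMap_cons, ih]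

theorem chain_zero (σ : ℕ → A → List A) (r : ℕ) (b : A) : chain σ r 0 b = [b] := rfl

theorem chain_succ (σ : ℕ → A → List A) (r n : ℕ) (b : A) :
    chain σ r (n + 1) b = wordMap (chain σ r n) (σ (r + n) b) := rfl

theorem chain_one (σ : ℕ → A → List A) (r : ℕ) (b : A) : chain σ r 1 b = σ r b := by
  rw [chain_succ]
  exact wordMap_id _

theorem chain_add (σ : ℕ → A → List A) (r m : ℕ) :
    ∀ (k : ℕ) (b : A), chain σ r (m + k) b = wordMap (chain σ r m) (chain σ (r + m) k b) := by
  intro k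
  induction k with
  | zero => intro b; rw [chain_zero, wordMap_singleton]; rfl
  | succ k ih =>
    intro b
    show chain σ r ((m + k) + 1) b = _
    rw [chain_succ, chain_succ, wordMap_wordMap]
    have : σ (r + (m + k)) b = σ (r + m + k) b := by rw [Nat.add_assoc]
    rw [this]
    congr 1
    funext c
    exact ih c

theorem chain_mem_Aseq (σ : ℕ → A → List A) (Aseq : ℕ → Set A)
    (hclose : ∀ n, ∀ b ∈ Aseq (n + 1), ∀ c ∈ σ n b, c ∈ Aseq n) :
    ∀ (k r : ℕ) (b : A), b ∈ Aseq (r + k) → ∀ c ∈ chain σ r k b, c ∈ Aseq r := by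
  intro k
  induction k with
  | zero =>
    intro r b hb c hc
    rw [chain_zero, List.mem_singleton] at hc
    rwa [hc]
  | succ k ih =>
    intro r b hb c hc
    rw [chain_succ, mem_wordMap] at hc
    obtain ⟨d, hd, hc⟩ := hc
    have hd' : d ∈ Aseq (r + k) := hclose (r + k) b (by rwa [Nat.add_assoc]) d hd
    exact ih r d hd' c hc

theorem chain_ne_nil (σ : ℕ → A → List A) (hne : ∀ j b, σ j b ≠ []) :
    ∀ (k r : ℕ) (b : A), chain σ r k b ≠ [] := by
  intro k
  induction k with
  | zero => intro r b; simp [chain_zero]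
  | succ k ih =>
    intro r b
    rw [chain_succ]
    obtain ⟨c, cs, hc⟩ := List.exists_cons_of_ne_nil (hne (r + k) b)
    rw [hc, wordMap_cons]
    simp only [ne_eq, List.append_eq_nil_iff]
    intro ⟨h1, _⟩
    exact ih r c h1

theorem chain_length_le (σ : ℕ → A → List A) (L : ℕ) (hL : ∀ j b, (σ j b).length ≤ L) :
    ∀ (k r : ℕ) (b : A), (chain σ r k b).length ≤ L ^ k := by
  intro k
  induction k with
  | zero => intro r b; simp [chain_zero]
  | succ k ih =>
    intro r b
    rw [chain_succ]
    calc (wordMap (chain σ r k) (σ (r + k) b)).length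
        ≤ (σ (r + k) b).length * L ^ k := length_wordMap_le _ _ _ (fun c _ => ih r c)
      _ ≤ L * L ^ k := Nat.mul_le_mul_right _ (hL _ _)
      _ = L ^ (k + 1) := by ring

theorem prefix_drop_append {u w : List A} {p : ℕ} (z : List A) (h : u <+: w.drop p) :
    u <+: (w ++ z).drop p := by
  rw [List.drop_append]
  exact h.trans (List.prefix_append _ _)

theorem seqTake_length (x : ℕ → A) (n : ℕ) : (seqTake x n).length = n := by simp [seqTake]

theorem seqTake_getElem (x : ℕ → A) (n m : ℕ) (h : m < n) :
    (seqTake x n)[m]'(by simp [seqTake_length, h]) = x m := by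
  simp [seqTake]
/-! ### Occurrence transfer and return-word bookkeeping -/

theorem occursAt_of_prefix {x : ℕ → A} {u w : List A} {i : ℕ}
    (h : OccursAt x w i) (hp : u <+: w) : OccursAt x u i := by
  intro k
  have hk : (k : ℕ) < w.length := lt_of_lt_of_le k.isLt hp.length_le
  have := h ⟨k, hk⟩
  simp only [List.get_eq_getElem] at this ⊢
  rw [this, hp.getElem k.isLt]

theorem occursAt_append_right {x : ℕ → A} {u w : List A} {i : ℕ}
    (h : OccursAt x (w ++ u) i) : OccursAt x u (i + w.length) := by
  intro k
  have hk : w.length + (k : ℕ) < (w ++ u).length := by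
    simp only [List.length_append]; omega
  have := h ⟨w.length + k, hk⟩
  simp only [List.get_eq_getElem] at this ⊢
  rw [← Nat.add_assoc] at this
  rw [this, List.getElem_append_right (by omega)]
  congr 1
  omega

theorem occ_window {x : ℕ → A} {u w : List A} {i₀ m : ℕ}
    (h : OccursAt x w i₀) (hu : OccursAt x u m) (h1 : i₀ ≤ m)
    (h2 : m + u.length ≤ i₀ + w.length) : u <+: w.drop (m - i₀) := by
  rw [List.prefix_iff_eq_take]
  refine List.ext_getElem (by simp; omega) ?_
  intro t ht1 ht2
  rw [List.getElem_take, List.getElem_drop]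
  have htu : t < u.length := ht1
  have hmw : m - i₀ + t < w.length := by omega
  have e1 := hu ⟨t, htu⟩
  have e2 := h ⟨m - i₀ + t, hmw⟩
  simp only [List.get_eq_getElem] at e1 e2
  rw [← e2, ← e1]
  congr 1
  omega

theorem occSet_two {u w : List A} (hu : u ≠ []) (hc : OccCountEq u w 2)
    (hle : u.length ≤ w.length) {d : ℕ} (hd0 : 0 < d) (hdw : d < w.length - u.length)
    (hmem : u <+: w.drop d) (h0 : u <+: w) (hlast : u <+: w.drop (w.length - u.length)) :
    False := by
  rw [OccCountEq, Set.ncard_eq_two] at hc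
  obtain ⟨p, q, hpq, hs⟩ := hc
  have m0 : 0 ∈ ({p, q} : Set ℕ) := by rw [← hs]; simpa using h0
  have m1 : d ∈ ({p, q} : Set ℕ) := by rw [← hs]; exact hmem
  have m2 : w.length - u.length ∈ ({p, q} : Set ℕ) := by rw [← hs]; exact hlast
  simp only [Set.mem_insert_iff, Set.mem_singleton_iff] at m0 m1 m2
  omega

theorem star_to_LRW (x : ℕ → A) (K : ℕ) (hK : 1 ≤ K)
    (hstar : ∀ u, u ≠ [] → Occurs x u → ∀ i : ℕ,
      ∃ j, i ≤ j ∧ j + u.length ≤ i + K * u.length ∧ OccursAt x u j) :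
    LinearlyRecurrentWith x K := by
  constructor
  · -- uniform recurrence
    intro u hu
    rcases eq_or_ne u [] with rfl | hne
    · exact ⟨1, fun i => ⟨i, le_refl _, by omega, fun k => absurd k.isLt (by simp)⟩⟩
    · refine ⟨K * u.length + 1, fun i => ?_⟩
      obtain ⟨j, h1, h2, h3⟩ := hstar u hne hu i
      have : 1 ≤ u.length := List.length_pos_iff.2 hne
      exact ⟨j, h1, by omega, h3⟩
  · -- return words
    intro u w hr
    obtain ⟨⟨i₀, hocc⟩, hpre, hcount⟩ := hr
    rcases eq_or_ne u [] with rfl | hne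
    · exfalso
      have : {i : ℕ | ([] : List A) <+: (w ++ []).drop i} = Set.univ := by
        ext i; simp
      rw [OccCountEq, this] at hcount
      rw [Set.Infinite.ncard Set.infinite_univ] at hcount
      omega
    have hulen : 1 ≤ u.length := List.length_pos_iff.2 hne
    have hu0 : OccursAt x u i₀ := occursAt_of_prefix hocc hpre
    obtain ⟨j, h1, h2, h3⟩ := hstar u hne ⟨i₀, hu0⟩ (i₀ + 1)
    have hwu : (w ++ u).length = w.length + u.length := by simp
    by_cases hj : j < i₀ + w.length
    · exfalso
      refine occSet_two hne hcount (by omega) (d := j - i₀) (by omega) (by omega) ?_ hpre ?_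
      · exact occ_window hocc h3 (by omega) (by omega)
      · have : (w ++ u).length - u.length = w.length := by omega
        rw [this, List.drop_left]
    · omega
/-! ### From a linearly recurrent sequence to the LR subshift -/

theorem exists_ultra_limit [Fintype A] (U : Ultrafilter ℕ) (g : ℕ → A) :
    ∃ b, {q | g q = b} ∈ U := by
  by_contra h
  push_neg at h
  have hcompl : ∀ b : A, {q | g q ≠ b} ∈ U := by
    intro b
    have := h b
    rwa [← Ultrafilter.compl_mem_iff_notMem] at this
  have hint : (⋂ b : A, {q | g q ≠ b}) ∈ (U : Filter ℕ) := by
    rw [Filter.iInter_mem]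
    exact hcompl
  have hempty : (⋂ b : A, {q | g q ≠ b}) = ∅ := by
    ext q
    simp only [Set.mem_iInter, Set.mem_setOf_eq, Set.mem_empty_iff_false, iff_false, not_forall,
      not_not]
    exact ⟨g q, rfl⟩
  rw [hempty] at hint
  exact Filter.empty_notMem (U : Filter ℕ) hint

/-- The finite window of a two-sided sequence, starting at `i`, of length `m`. -/
def zword (z : ℤ → A) (i : ℤ) (m : ℕ) : List A :=
  (List.range m).map (fun t : ℕ => z (i + (t : ℤ)))

theorem zword_length (z : ℤ → A) (i : ℤ) (m : ℕ) : (zword z i m).length = m := by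
  rw [zword, List.length_map, List.length_range]

theorem zword_get (z : ℤ → A) (i : ℤ) (m t : ℕ) (h : t < m) :
    (zword z i m)[t]'(by simp [zword_length, h]) = z (i + t) := by
  simp only [zword, List.getElem_map, List.getElem_range]

theorem zword_occursAtZ (z : ℤ → A) (i : ℤ) (m : ℕ) : OccursAtZ z (zword z i m) i := by
  intro k
  have hk : (k : ℕ) < m := by simpa [zword_length] using k.isLt
  simp only [List.get_eq_getElem]
  rw [zword_get z i m k hk]

theorem occursZ_trans_of_UR {x : ℕ → A} (hUR : UniformlyRecurrent x) (z' : ℤ → A)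
    (hz' : ∀ u, OccursZ z' u → Occurs x u) :
    ∀ u, Occurs x u → OccursZ z' u := by
  intro u hu
  obtain ⟨M, hM⟩ := hUR u hu
  obtain ⟨q, hq⟩ := hz' (zword z' 0 (M + u.length)) ⟨0, zword_occursAtZ z' 0 (M + u.length)⟩
  obtain ⟨j, hj1, hj2, hj3⟩ := hM q
  refine ⟨((j - q : ℕ) : ℤ), ?_⟩
  intro k
  have hk : (j - q) + (k : ℕ) < M + u.length := by have := k.isLt; omega
  have e1 := hq ⟨j - q + k, by simpa [zword_length] using hk⟩
  simp only [List.get_eq_getElem] at e1 ⊢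
  have e2 := hj3 k
  simp only [List.get_eq_getElem] at e2
  have h0 : z' (((j - q : ℕ) : ℤ) + (k : ℕ)) = z' (0 + ((j - q + (k : ℕ) : ℕ) : ℤ)) := by
    congr 1
    push_cast
    omega
  rw [h0, ← zword_get z' 0 (M + u.length) _ hk, ← e1, ← e2]
  congr 1
  omega

theorem LRW_to_subshift [Fintype A] (x : ℕ → A) (K : ℕ)
    (h : LinearlyRecurrentWith x K) : IsLRSubshift (SubshiftGen x) := by
  classical
  set U : Ultrafilter ℕ := Ultrafilter.of Filter.atTop with hU
  have hUatTop : ∀ s ∈ (Filter.atTop : Filter ℕ), s ∈ U := fun s hs =>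
    Ultrafilter.of_le Filter.atTop hs
  have hzex : ∀ k : ℤ, ∃ b, {q : ℕ | x ((k + (q : ℤ)).toNat) = b} ∈ U := fun k =>
    exists_ultra_limit U _
  choose z hz using hzex
  -- every word of z occurs in x
  have hzx : ∀ (u : List A) (i : ℤ), OccursAtZ z u i → Occurs x u := by
    intro u i hocc
    have hbig : ((⋂ t : Fin u.length, {q : ℕ | x ((i + (t : ℕ) + (q : ℤ)).toNat) = z (i + (t : ℕ))})
        ∩ {q : ℕ | i.natAbs ≤ q}) ∈ U := by
      refine Filter.inter_mem ?_ (hUatTop _ (Filter.mem_atTop _))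
      rw [Filter.iInter_mem]
      intro t
      exact hz (i + (t : ℕ))
    obtain ⟨q, hq⟩ := Ultrafilter.nonempty_of_mem hbig
    obtain ⟨hq1, hq2⟩ := hq
    simp only [Set.mem_iInter, Set.mem_setOf_eq] at hq1 hq2
    refine ⟨(i + q).toNat, ?_⟩
    intro k
    have e1 := hq1 k
    have e2 := hocc k
    simp only [List.get_eq_getElem] at e2 ⊢
    rw [← e2, ← e1]
    congr 1
    omega
  have hzsub : z ∈ SubshiftGen x := fun u hu => by
    obtain ⟨i, hi⟩ := hu
    exact hzx u i hi
  -- uniform recurrence of z (as a two-sided sequence)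
  have hURZ : UniformlyRecurrentZ z := by
    intro u hu
    obtain ⟨i0, hocc0⟩ := hu
    have hux : Occurs x u := hzx u i0 hocc0
    obtain ⟨M, hM⟩ := h.1 u hux
    refine ⟨M, fun i => ?_⟩
    obtain ⟨q, hq⟩ := hzx (zword z i (M + u.length)) i (zword_occursAtZ z i (M + u.length))
    obtain ⟨j, hj1, hj2, hj3⟩ := hM q
    refine ⟨i + ((j - q : ℕ) : ℤ), by omega, by push_cast; omega, ?_⟩
    intro k
    have hk : (j - q) + (k : ℕ) < M + u.length := by
      have := k.isLt; omega
    have e1 := hq ⟨j - q + k, by simpa [zword_length] using hk⟩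
    simp only [List.get_eq_getElem] at e1 ⊢
    rw [zword_get z i (M + u.length) (j - q + k) hk] at e1
    have e2 := hj3 k
    simp only [List.get_eq_getElem] at e2
    have h0 : i + ((j - q : ℕ) : ℤ) + (k : ℕ) = i + ((j - q + (k : ℕ) : ℕ) : ℤ) := by
      push_cast
      omega
    rw [h0, ← e1, ← e2]
    congr 1
    omega
  refine ⟨⟨⟨z, hzsub⟩, ?_⟩, z, hzsub, hURZ, K, ?_⟩
  · -- minimality
    intro z' hz'
    have hiff : ∀ u, Occurs x u ↔ OccursZ z' u :=
      fun u => ⟨fun hu => occursZ_trans_of_UR h.1 z' hz' u hu, fun hu => hz' u hu⟩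
    ext w
    constructor
    · intro hw u hu
      exact (hiff u).1 (hw u hu)
    · intro hw u hu
      exact (hiff u).2 (hw u hu)
  · -- return words of z
    intro u w hr
    obtain ⟨⟨i, hocc⟩, h2, h3⟩ := hr
    exact h.2 u w ⟨hzx (w ++ u) i hocc, h2, h3⟩
/-! ### The periodic case -/

theorem occursAt_add_period {x : ℕ → A} {p : ℕ} (hper : ∀ m, x (m + p) = x m)
    {u : List A} {j : ℕ} (h : OccursAt x u j) : OccursAt x u (j + p) := by
  intro k
  have := h k
  rw [← this]
  have e : j + p + (k : ℕ) = (j + (k : ℕ)) + p := by omega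
  rw [e, hper]

theorem occursAt_sub_period {x : ℕ → A} {p : ℕ} (hper : ∀ m, x (m + p) = x m)
    {u : List A} {j : ℕ} (h : OccursAt x u (j + p)) : OccursAt x u j := by
  intro k
  have := h k
  rw [← this]
  have e : j + p + (k : ℕ) = (j + (k : ℕ)) + p := by omega
  rw [e, hper]

theorem periodic_star (x : ℕ → A) (p : ℕ) (hp : 0 < p) (hper : ∀ m, x (m + p) = x m) :
    ∀ u, u ≠ [] → Occurs x u → ∀ i : ℕ,
      ∃ j, i ≤ j ∧ j + u.length ≤ i + (2 * p + 1) * u.length ∧ OccursAt x u j := by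
  have hdesc : ∀ (c j : ℕ) u, OccursAt x u (j + c * p) → OccursAt x u j := by
    intro c
    induction c with
    | zero => intro j u h; simpa using h
    | succ c ih =>
      intro j u h
      have : j + (c + 1) * p = (j + c * p) + p := by ring
      rw [this] at h
      exact ih j u (occursAt_sub_period hper h)
  have hasc : ∀ (c j : ℕ) u, OccursAt x u j → OccursAt x u (j + c * p) := by
    intro c
    induction c with
    | zero => intro j u h; simpa using h
    | succ c ih =>
      intro j u h
      have : j + (c + 1) * p = (j + c * p) + p := by ring
      rw [this]
      exact occursAt_add_period hper (ih j u h)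
  intro u hne hu i
  obtain ⟨j₀, hj₀⟩ := hu
  have hulen : 1 ≤ u.length := List.length_pos_iff.2 hne
  have hsmall : OccursAt x u (j₀ % p) := by
    have : j₀ = j₀ % p + (j₀ / p) * p := by
      have := Nat.mod_add_div' j₀ p
      omega
    rw [this] at hj₀
    exact hdesc _ _ _ hj₀
  have h1 := Nat.mod_lt j₀ hp
  have h2 := Nat.mod_add_div' i p
  have h3 := Nat.mod_lt i hp
  have e4 : (i / p + 1) * p = i / p * p + p := by ring
  have e5 : (2 * p + 1) * u.length = 2 * p * u.length + u.length := by ring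
  have h6 : 2 * p ≤ 2 * p * u.length := Nat.le_mul_of_pos_right _ hulen
  refine ⟨j₀ % p + (i / p + 1) * p, by omega, by omega, hasc _ _ _ hsmall⟩
/-! ### The S-adic machinery : the key linear-recurrence estimate -/

theorem sadic_star {A : Type*} [Fintype A]
    (S : Set (A → List A)) (hSfin : S.Finite) (hSproper : ∀ σ ∈ S, ProperMorphism σ)
    (σseq : ℕ → A → List A) (hmem : ∀ n, σseq n ∈ S)
    (Aseq : ℕ → Set A) (a : A) (x : ℕ → A) (s0 : ℕ)
    (hgen : GeneratesSAdic σseq Aseq a x)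
    (hprim : PrimitiveWith σseq Aseq s0)
    (hNP : ∀ B : ℕ, ∃ k, B ≤ (chain σseq 0 (k + 1) a).length) :
    ∃ K, 1 ≤ K ∧ ∀ u, u ≠ [] → Occurs x u → ∀ i : ℕ,
      ∃ j, i ≤ j ∧ j + u.length ≤ i + K * u.length ∧ OccursAt x u j := by
  classical
  obtain ⟨⟨ha, hclose⟩, hconv⟩ := hgen
  choose Nc hNc using hconv
  have hpropex : ∀ j, ∃ l r : A, ∀ b, (σseq j b).head? = some l ∧ (σseq j b).getLast? = some r :=
    fun j => hSproper _ (hmem j)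
  choose lf rf hlr using hpropex
  have hne : ∀ j (b : A), σseq j b ≠ [] := by
    intro j b hnil
    have := (hlr j b).1
    rw [hnil] at this
    simp at this
  -- the basic length bound
  obtain ⟨L, hL, hL1⟩ : ∃ L : ℕ, (∀ j (b : A), (σseq j b).length ≤ L) ∧ 1 ≤ L := by
    refine ⟨max 1 (hSfin.toFinset.sup (fun σ => Finset.univ.sup fun b => (σ b).length)),
      fun j b => ?_, le_max_left _ _⟩
    calc (σseq j b).length ≤ Finset.univ.sup (fun b => (σseq j b).length) :=
          Finset.le_sup (f := fun b => (σseq j b).length) (Finset.mem_univ b)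
      _ ≤ hSfin.toFinset.sup (fun σ => Finset.univ.sup fun b => (σ b).length) :=
          Finset.le_sup (f := fun σ => Finset.univ.sup fun b => (σ b).length)
            (hSfin.mem_toFinset.2 (hmem j))
      _ ≤ _ := le_max_right _ _
  have hLpow : ∀ d : ℕ, 1 ≤ L ^ d := fun d => Nat.one_le_pow _ _ hL1
  have hChainNe : ∀ (k r : ℕ) (b : A), chain σseq r k b ≠ [] := chain_ne_nil σseq hne
  have hChainLen : ∀ (k r : ℕ) (b : A), (chain σseq r k b).length ≤ L ^ k :=
    chain_length_le σseq L hL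
  have hChainMem : ∀ (k r : ℕ) (b : A), b ∈ Aseq (r + k) → ∀ c ∈ chain σseq r k b, c ∈ Aseq r :=
    chain_mem_Aseq σseq Aseq hclose
  -- monotonicity and stabilization of the alphabets
  have hastep : ∀ r, Aseq r ⊆ Aseq (r + 1) := by
    intro r b hb
    have h1 : b ∈ chain σseq (r + 1) s0 a := hprim r b hb a (ha _)
    exact hChainMem s0 (r + 1) a (ha _) b h1
  have hmono : ∀ r r', r ≤ r' → Aseq r ⊆ Aseq r' := by
    intro r r' h
    induction r' , h using Nat.le_induction with
    | base => exact fun _ h => h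
    | succ m hm ih => exact fun c hc => hastep m (ih hc)
  obtain ⟨n₀, hstab⟩ : ∃ n₀, ∀ m, n₀ ≤ m → Aseq n₀ = Aseq m := by
    have hfb : ∀ m, (Aseq m).ncard ≤ Fintype.card A := by
      intro m
      have := Set.ncard_le_ncard (Set.subset_univ (Aseq m)) Set.finite_univ
      rwa [Set.ncard_univ, Nat.card_eq_fintype_card] at this
    have hVex : ∃ m, (Aseq m).ncard =
        Nat.findGreatest (fun v => ∃ m, (Aseq m).ncard = v) (Fintype.card A) :=
      Nat.findGreatest_spec (P := fun v => ∃ m, (Aseq m).ncard = v) (hfb 0) ⟨0, rfl⟩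
    obtain ⟨n₀, hn₀⟩ := hVex
    refine ⟨n₀, fun m hm => ?_⟩
    refine Set.eq_of_subset_of_ncard_le (hmono _ _ hm) ?_ (Set.toFinite _)
    have h2 : (Aseq m).ncard ≤
        Nat.findGreatest (fun v => ∃ m, (Aseq m).ncard = v) (Fintype.card A) :=
      Nat.le_findGreatest (hfb m) ⟨m, rfl⟩
    omega
  -- maximal and minimal lengths of the images of the letters of the alphabets
  obtain ⟨Pm, hPle, hPwit⟩ : ∃ Pm : ℕ → ℕ,
      (∀ m (b : A), b ∈ Aseq m → (chain σseq 0 m b).length ≤ Pm m) ∧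
        (∀ m, ∃ b ∈ Aseq m, Pm m = (chain σseq 0 m b).length) := by
    refine ⟨fun m => ((Set.toFinite (Aseq m)).toFinset).sup
      fun b => (chain σseq 0 m b).length, fun m b hb => ?_, fun m => ?_⟩
    · exact Finset.le_sup (f := fun b => (chain σseq 0 m b).length)
        ((Set.Finite.mem_toFinset _).2 hb)
    · obtain ⟨b, hb, he⟩ := Finset.exists_mem_eq_sup ((Set.toFinite (Aseq m)).toFinset)
        ⟨a, (Set.Finite.mem_toFinset _).2 (ha m)⟩ (fun b => (chain σseq 0 m b).length)
      exact ⟨b, (Set.Finite.mem_toFinset _).1 hb, he⟩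
  obtain ⟨Qm, hQle, hQwit⟩ : ∃ Qm : ℕ → ℕ,
      (∀ m (b : A), b ∈ Aseq m → Qm m ≤ (chain σseq 0 m b).length) ∧
        (∀ m, ∃ b ∈ Aseq m, Qm m = (chain σseq 0 m b).length) := by
    refine ⟨fun m => ((Set.toFinite (Aseq m)).toFinset).inf'
      ⟨a, (Set.Finite.mem_toFinset _).2 (ha m)⟩ (fun b => (chain σseq 0 m b).length),
      fun m b hb => ?_, fun m => ?_⟩
    · exact Finset.inf'_le (fun b => (chain σseq 0 m b).length)
        ((Set.Finite.mem_toFinset _).2 hb)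
    · obtain ⟨b, hb, he⟩ := Finset.exists_mem_eq_inf'
        (⟨a, (Set.Finite.mem_toFinset _).2 (ha m)⟩ :
          ((Set.toFinite (Aseq m)).toFinset).Nonempty) (fun b => (chain σseq 0 m b).length)
      exact ⟨b, (Set.Finite.mem_toFinset _).1 hb, he⟩
  have hP1 : ∀ m, 1 ≤ Pm m := fun m =>
    le_trans (List.length_pos_iff.2 (hChainNe m 0 a)) (hPle m a (ha m))
  have hQ1 : ∀ m, 1 ≤ Qm m := by
    intro m
    obtain ⟨b, hb, he⟩ := hQwit m
    rw [he]
    exact List.length_pos_iff.2 (hChainNe m 0 b)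
  -- the one-step decomposition of chains from level 0
  have hCsucc : ∀ m (b : A), chain σseq 0 (m + 1) b = wordMap (chain σseq 0 m) (σseq m b) := by
    intro m b
    rw [chain_succ, Nat.zero_add]
  have hCadd : ∀ (m k : ℕ) (b : A),
      chain σseq 0 (m + k) b = wordMap (chain σseq 0 m) (chain σseq m k b) := by
    intro m k b
    rw [chain_add, Nat.zero_add]
  have hQmono : ∀ m m', m ≤ m' → Qm m ≤ Qm m' := by
    have hstep : ∀ m, Qm m ≤ Qm (m + 1) := by
      intro m
      obtain ⟨b, hb, he⟩ := hQwit (m + 1)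
      obtain ⟨c, hc⟩ := List.exists_mem_of_ne_nil _ (hne m b)
      have hcA : c ∈ Aseq m := hclose m b hb c hc
      calc Qm m ≤ (chain σseq 0 m c).length := hQle m c hcA
        _ ≤ (wordMap (chain σseq 0 m) (σseq m b)).length := (fac_of_mem_image _ hc).length_le
        _ = (chain σseq 0 (m + 1) b).length := by rw [hCsucc]
        _ = Qm (m + 1) := he.symm
    intro m m' h
    induction m', h using Nat.le_induction with
    | base => exact le_refl _
    | succ k hk ih => exact le_trans ih (hstep k)
  have hPstep : ∀ m, Pm (m + 1) ≤ L * Pm m := by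
    intro m
    obtain ⟨b, hb, he⟩ := hPwit (m + 1)
    rw [he, hCsucc]
    calc (wordMap (chain σseq 0 m) (σseq m b)).length
        ≤ (σseq m b).length * Pm m := length_wordMap_le _ _ _
          (fun c hc => hPle m c (hclose m b hb c hc))
      _ ≤ L * Pm m := Nat.mul_le_mul_right _ (hL m b)
  have hPsteps : ∀ (d m : ℕ), Pm (m + d) ≤ L ^ d * Pm m := by
    intro d
    induction d with
    | zero => intro m; simp
    | succ d ih =>
      intro m
      calc Pm (m + (d + 1)) = Pm ((m + d) + 1) := by ring_nf
        _ ≤ L * Pm (m + d) := hPstep _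
        _ ≤ L * (L ^ d * Pm m) := Nat.mul_le_mul_left _ (ih m)
        _ = L ^ (d + 1) * Pm m := by ring
  -- comparability of lengths at a fixed (large enough) level
  have hcomp : ∀ m, n₀ + s0 + 1 ≤ m → Pm m ≤ L ^ s0 * Qm m := by
    intro m hm
    obtain ⟨r, hrm, hrn₀⟩ : ∃ r, m = (r + 1) + s0 ∧ n₀ ≤ r := ⟨m - s0 - 1, by omega, by omega⟩
    obtain ⟨b, hb, he⟩ := hPwit m
    obtain ⟨c, hc, hce⟩ := hQwit m
    have hkey : ∀ e : A, e ∈ Aseq (r + 1) →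
        (chain σseq 0 (r + 1) e).length ≤ Qm m := by
      intro e he'
      have heA : e ∈ Aseq r := by
        have e1 : Aseq n₀ = Aseq r := hstab r hrn₀
        have e2 : Aseq n₀ = Aseq (r + 1) := hstab (r + 1) (by omega)
        rw [← e1, e2]
        exact he'
      have hprem : e ∈ chain σseq (r + 1) s0 c :=
        hprim r e heA c (by rw [show r + s0 + 1 = m by omega]; exact hc)
      have : Fac (chain σseq 0 (r + 1) e) (chain σseq 0 m c) := by
        rw [hrm, hCadd (r + 1) s0 c]
        exact fac_of_mem_image _ hprem
      rw [hce]
      exact this.length_le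
    have hd : chain σseq 0 m b = wordMap (chain σseq 0 (r + 1)) (chain σseq (r + 1) s0 b) := by
      rw [hrm, hCadd (r + 1) s0 b]
    rw [he, hd]
    calc (wordMap (chain σseq 0 (r + 1)) (chain σseq (r + 1) s0 b)).length
        ≤ (chain σseq (r + 1) s0 b).length * Qm m := length_wordMap_le _ _ _
          (fun e he' => hkey e (hChainMem s0 (r + 1) b (by rw [← hrm]; exact hb) e he'))
      _ ≤ L ^ s0 * Qm m := Nat.mul_le_mul_right _ (hChainLen _ _ _)
  -- divergence of the minimal lengths
  have hQinf : ∀ B : ℕ, ∃ M, ∀ m, M ≤ m → B ≤ Qm m := by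
    intro B
    obtain ⟨k, hk⟩ := hNP (L ^ s0 * B + L ^ (n₀ + s0 + 1) + 1)
    have hklarge : n₀ + s0 + 1 < k + 1 := by
      by_contra hcon
      push_neg at hcon
      have h1 : (chain σseq 0 (k + 1) a).length ≤ L ^ (k + 1) := hChainLen _ _ _
      have h2 : L ^ (k + 1) ≤ L ^ (n₀ + s0 + 1) := Nat.pow_le_pow_right hL1 hcon
      omega
    have h3 : (chain σseq 0 (k + 1) a).length ≤ Pm (k + 1) := hPle _ a (ha _)
    have h4 : Pm (k + 1) ≤ L ^ s0 * Qm (k + 1) := hcomp _ (by omega)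
    have h5 : L ^ s0 * B ≤ L ^ s0 * Qm (k + 1) := by omega
    have h6 : B ≤ Qm (k + 1) := Nat.le_of_mul_le_mul_left h5 (by positivity)
    exact ⟨k + 1, fun m hm => le_trans h6 (hQmono _ _ hm)⟩
  -- prefixes of x are prefixes of the generating words
  have hpre : ∀ t : ℕ, ∃ k₀, ∀ k, k₀ ≤ k →
      t ≤ (chain σseq 0 (k + 1) a).length ∧
        (chain σseq 0 (k + 1) a).take t = seqTake x t := by
    intro t
    obtain ⟨M, hM⟩ := hQinf t
    refine ⟨max M ((Finset.range t).sup Nc), fun k hk => ?_⟩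
    have hlen : t ≤ (chain σseq 0 (k + 1) a).length := by
      calc t ≤ Qm (k + 1) := hM _ (by omega)
        _ ≤ (chain σseq 0 (k + 1) a).length := hQle _ a (ha _)
    refine ⟨hlen, ?_⟩
    refine List.ext_getElem (by rw [List.length_take, seqTake_length]; omega) ?_
    intro m h1 h2
    have hmt : m < t := by simpa [seqTake_length] using h2
    have hmlen : m < (chain σseq 0 (k + 1) a).length := by omega
    have hrep : repSeq (chain σseq 0 (k + 1) a) a m = x m :=
      hNc m k (le_trans (le_trans (Finset.le_sup (Finset.mem_range.2 hmt))
        (le_max_right _ _)) hk)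
    rw [seqTake_getElem x t m hmt, ← hrep, repSeq,
      List.getD_eq_getElem _ _ (by rw [Nat.mod_eq_of_lt hmlen]; exact hmlen),
      List.getElem_take]
    congr 1
    exact (Nat.mod_eq_of_lt hmlen).symm
  -- pointwise description of prefixes
  have hpoint : ∀ (w : List A) (t : ℕ), w.take t = seqTake x t → ∀ n, n < t →
      ∀ (hw : n < w.length), w[n] = x n := by
    intro w t he n hn hw
    have h1 : n < (w.take t).length := by rw [List.length_take]; omega
    have e := List.getElem_of_eq he h1
    rw [List.getElem_take] at e
    rw [e, seqTake_getElem x t n hn]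
  -- occurrences of factors of x inside the generating words
  have hxW : ∀ (u : List A) (p : ℕ), OccursAt x u p →
      ∃ k₀, ∀ k, k₀ ≤ k → u <+: (chain σseq 0 (k + 1) a).drop p := by
    intro u p hocc
    obtain ⟨k₀, hk₀⟩ := hpre (p + u.length)
    refine ⟨k₀, fun k hk => ?_⟩
    obtain ⟨hlen, htake⟩ := hk₀ k hk
    rw [List.prefix_iff_eq_take]
    refine List.ext_getElem (by rw [List.length_take, List.length_drop]; omega) ?_
    intro n hn1 hn2
    have hnu : n < u.length := hn1
    rw [List.getElem_take, List.getElem_drop,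
      hpoint _ _ htake (p + n) (by omega) (by omega)]
    have e2 := hocc ⟨n, hnu⟩
    simp only [List.get_eq_getElem] at e2
    exact e2.symm
  -- the linear recurrence constant
  refine ⟨3 * L ^ (s0 + 2) * Pm (n₀ + s0 + 1) + 3 * L ^ (2 * s0 + 2) + 1, by omega, ?_⟩
  intro u hne' huocc i
  have hulen : 1 ≤ u.length := List.length_pos_iff.2 hne'
  -- choice of the level n
  have hQex : ∃ n', (n₀ + s0 + 2 ≤ n') ∧ u.length ≤ Qm n' := by
    obtain ⟨M, hM⟩ := hQinf u.length
    exact ⟨max M (n₀ + s0 + 2), le_max_right _ _, hM _ (le_max_left _ _)⟩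
  obtain ⟨n, ⟨hnB, hnQ⟩, hnmin⟩ : ∃ n, ((n₀ + s0 + 2 ≤ n) ∧ u.length ≤ Qm n) ∧
      ∀ n' < n, ¬((n₀ + s0 + 2 ≤ n') ∧ u.length ≤ Qm n') :=
    ⟨Nat.find hQex, Nat.find_spec hQex, fun n' h => Nat.find_min hQex h⟩
  -- an occurrence of u inside a generating word, decomposed at level n
  obtain ⟨p, hp⟩ := huocc
  obtain ⟨k₀1, hk₀1⟩ := hxW u p hp
  obtain ⟨k, hkk₀, hkn⟩ : ∃ k, k₀1 ≤ k ∧ n ≤ k := ⟨max k₀1 n, le_max_left _ _, le_max_right _ _⟩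
  obtain ⟨V, hV⟩ : ∃ V, V = chain σseq n (k + 1 - n) a := ⟨_, rfl⟩
  have hdecW : wordMap (chain σseq 0 n) V = chain σseq 0 (k + 1) a := by
    rw [hV, ← hCadd]
    congr 1
    omega
  have hVAseq : ∀ b ∈ V, b ∈ Aseq n := by
    intro b hb
    refine hChainMem (k + 1 - n) n a (ha _) b ?_
    rw [← hV]
    exact hb
  have hVlen : ∀ b ∈ V, u.length ≤ (chain σseq 0 n b).length :=
    fun b hb => le_trans hnQ (hQle n b (hVAseq b hb))
  have hfacu' : Fac u (wordMap (chain σseq 0 n) V) := by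
    rw [hdecW]
    exact fac_of_prefix_drop (hk₀1 k hkk₀)
  -- unified junction property at some level NN
  have huni : ∃ NN, n - 1 ≤ NN ∧ NN ≤ n + s0 + 1 ∧
      ∀ c c' : A, c ∈ Aseq NN → c' ∈ Aseq NN →
        Fac u (chain σseq 0 NN c ++ chain σseq 0 NN c') := by
    rcases twoblock (chain σseq 0 n) V u hne' hVlen hfacu' with ⟨b, hbV, hfb⟩ | ⟨d, e, hde, hfde⟩
    · -- u is a factor of a single level-n image
      refine ⟨n + s0, by omega, by omega, ?_⟩
      intro c c' hc _
      have hbA' : b ∈ Aseq (n - 1) := by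
        rw [← hstab (n - 1) (by omega), hstab n (by omega)]
        exact hVAseq b hbV
      have hprem : b ∈ chain σseq ((n - 1) + 1) s0 c := by
        refine hprim (n - 1) b hbA' c ?_
        rw [show n - 1 + s0 + 1 = n + s0 by omega]
        exact hc
      rw [show n - 1 + 1 = n by omega] at hprem
      have hfc : Fac (chain σseq 0 n b) (chain σseq 0 (n + s0) c) := by
        rw [hCadd n s0 c]
        exact fac_of_mem_image _ hprem
      exact (hfb.trans hfc).append_right _
    · -- u straddles two consecutive level-n images
      obtain ⟨V₂, hV₂⟩ : ∃ V₂, V₂ = chain σseq (n + 1) (k - n) a := ⟨_, rfl⟩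
      have hVdec : V = wordMap (σseq n) V₂ := by
        rw [hV, hV₂, show k + 1 - n = 1 + (k - n) by omega, chain_add]
        congr 1
        funext b
        exact chain_one σseq n b
      have hVA₂ : ∀ f ∈ V₂, f ∈ Aseq (n + 1) := by
        intro f hf
        refine hChainMem (k - n) (n + 1) a (ha _) f ?_
        rw [← hV₂]
        exact hf
      have hde' : Fac [d, e] (wordMap (σseq n) V₂) := by
        rw [← hVdec]
        exact hde
      rcases adjclass (σseq n) (hne n) V₂ d e hde' with ⟨f, hfV₂, hff⟩ |
        ⟨⟨f1, _, hd1⟩, ⟨f2, _, he2⟩⟩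
      · -- the straddled pair lies inside a single σ-image
        refine ⟨n + s0 + 1, by omega, by omega, ?_⟩
        intro c c' hc _
        have hfA : f ∈ Aseq n := by
          rw [← hstab n (by omega), hstab (n + 1) (by omega)]
          exact hVA₂ f hfV₂
        have h1 : Fac (chain σseq 0 n d ++ chain σseq 0 n e) (chain σseq 0 (n + 1) f) := by
          rw [hCsucc n f]
          have h2 := hff.wordMap (chain σseq 0 n)
          rw [wordMap_cons, wordMap_cons, wordMap_nil, List.append_nil] at h2
          exact h2
        have hprem : f ∈ chain σseq (n + 1) s0 c := hprim n f hfA c hc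
        have h2 : Fac (chain σseq 0 (n + 1) f) (chain σseq 0 (n + s0 + 1) c) := by
          rw [show n + s0 + 1 = (n + 1) + s0 by omega, hCadd (n + 1) s0 c]
          exact fac_of_mem_image _ hprem
        exact ((hfde.trans h1).trans h2).append_right _
      · -- a genuine straddle : d is the common last letter, e the common first letter
        have hd' : d = rf n := Option.some.inj (hd1.symm.trans (hlr n f1).2)
        have he' : e = lf n := Option.some.inj (he2.symm.trans (hlr n f2).1)
        refine ⟨n + 1, by omega, by omega, ?_⟩
        intro c c' _ _
        obtain ⟨z1, hz1⟩ := List.getLast?_eq_some_iff.1 (hlr n c).2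
        obtain ⟨z2, hz2⟩ := List.head?_eq_some_iff.1 (hlr n c').1
        have e1 : chain σseq 0 (n + 1) c =
            wordMap (chain σseq 0 n) z1 ++ chain σseq 0 n (rf n) := by
          rw [hCsucc n c, hz1, wordMap_append, wordMap_singleton]
        have e2 : chain σseq 0 (n + 1) c' =
            chain σseq 0 n (lf n) ++ wordMap (chain σseq 0 n) z2 := by
          rw [hCsucc n c', hz2, wordMap_cons]
        rw [e1, e2]
        have h3 : Fac u (chain σseq 0 n (rf n) ++ chain σseq 0 n (lf n)) := by
          rw [← hd', ← he']
          exact hfde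
        have h4 := (h3.append_left (wordMap (chain σseq 0 n) z1)).append_right
          (wordMap (chain σseq 0 n) z2)
        simpa [List.append_assoc] using h4
  obtain ⟨NN, hNN1, hNN2, hjun⟩ := huni
  -- syndeticity at level NN inside a long generating word
  obtain ⟨k₂, hk₂⟩ := hpre (i + 3 * Pm NN)
  obtain ⟨k₁, hk₁a, hk₁b⟩ : ∃ k₁, k₂ ≤ k₁ ∧ NN ≤ k₁ := ⟨max k₂ NN, le_max_left _ _, le_max_right _ _⟩
  obtain ⟨hlen1, htake1⟩ := hk₂ k₁ hk₁a
  obtain ⟨V₁, hV₁⟩ : ∃ V₁, V₁ = chain σseq NN (k₁ + 1 - NN) a := ⟨_, rfl⟩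
  have hdecW1 : wordMap (chain σseq 0 NN) V₁ = chain σseq 0 (k₁ + 1) a := by
    rw [hV₁, ← hCadd]
    congr 1
    omega
  have hV₁A : ∀ b ∈ V₁, b ∈ Aseq NN := by
    intro b hb
    refine hChainMem (k₁ + 1 - NN) NN a (ha _) b ?_
    rw [← hV₁]
    exact hb
  obtain ⟨j, hj1, hj2, hj3⟩ := syn (chain σseq 0 NN) u (Pm NN) (hP1 NN) V₁
    (fun b hb => ⟨List.length_pos_iff.2 (hChainNe _ _ _), hPle NN b (hV₁A b hb)⟩)
    (fun b hb b' hb' => hjun b b' (hV₁A b hb) (hV₁A b' hb')) i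
    (by rw [hdecW1]; exact hlen1)
  rw [hdecW1] at hj3
  have hoccxj : OccursAt x u j := by
    intro kk
    have h1 : j + (kk : ℕ) < i + 3 * Pm NN := by
      have := kk.isLt
      omega
    have e3 := hj3.getElem kk.isLt
    rw [List.getElem_drop] at e3
    simp only [List.get_eq_getElem]
    rw [e3, hpoint _ _ htake1 (j + (kk : ℕ)) h1 (by omega)]
  -- the final length estimate
  have hPNN : Pm NN ≤ L ^ (s0 + 2) * Pm (n - 1) := by
    calc Pm NN = Pm ((n - 1) + (NN - (n - 1))) := by rw [show (n-1) + (NN - (n-1)) = NN by omega]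
      _ ≤ L ^ (NN - (n - 1)) * Pm (n - 1) := hPsteps _ _
      _ ≤ L ^ (s0 + 2) * Pm (n - 1) :=
          Nat.mul_le_mul_right _ (Nat.pow_le_pow_right hL1 (by omega))
  have hbound : 3 * Pm NN ≤
      (3 * L ^ (s0 + 2) * Pm (n₀ + s0 + 1) + 3 * L ^ (2 * s0 + 2) + 1) * u.length := by
    rcases eq_or_lt_of_le hnB with heq | hlt
    · have : Pm (n - 1) = Pm (n₀ + s0 + 1) := by rw [show n - 1 = n₀ + s0 + 1 by omega]
      have h5 : 3 * Pm NN ≤ 3 * L ^ (s0 + 2) * Pm (n₀ + s0 + 1) := by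
        rw [← this]
        calc 3 * Pm NN ≤ 3 * (L ^ (s0 + 2) * Pm (n - 1)) := by omega
          _ = 3 * L ^ (s0 + 2) * Pm (n - 1) := by ring
      calc 3 * Pm NN ≤ 3 * L ^ (s0 + 2) * Pm (n₀ + s0 + 1) + 3 * L ^ (2 * s0 + 2) + 1 := by omega
        _ ≤ _ := Nat.le_mul_of_pos_right _ hulen
    · have hmin := hnmin (n - 1) (by omega)
      push_neg at hmin
      have hQsmall : Qm (n - 1) < u.length := hmin (by omega)
      have h6 : Pm (n - 1) ≤ L ^ s0 * Qm (n - 1) := hcomp (n - 1) (by omega)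
      have h7 : 3 * Pm NN ≤ 3 * L ^ (2 * s0 + 2) * u.length := by
        calc 3 * Pm NN ≤ 3 * (L ^ (s0 + 2) * Pm (n - 1)) := by omega
          _ ≤ 3 * (L ^ (s0 + 2) * (L ^ s0 * Qm (n - 1))) := by
              have := Nat.mul_le_mul_left (L ^ (s0 + 2)) h6
              omega
          _ = 3 * L ^ (2 * s0 + 2) * Qm (n - 1) := by
              rw [show (2 * s0 + 2) = (s0 + 2) + s0 by omega, pow_add]
              ring
          _ ≤ 3 * L ^ (2 * s0 + 2) * u.length := Nat.mul_le_mul_left _ (by omega)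
      calc 3 * Pm NN ≤ 3 * L ^ (2 * s0 + 2) * u.length := h7
        _ ≤ _ := Nat.mul_le_mul_right _ (by omega)
  exact ⟨j, hj1, by omega, hoccxj⟩
/-- A primitive S-adic sequence over a finite set of proper morphisms is linearly
recurrent, and consequently the subshift it generates is linearly recurrent. -/
theorem primitive_proper_sadic_imp_lr {A : Type*} [Fintype A]
    (S : Set (A → List A)) (hSfin : S.Finite) (hSproper : ∀ σ ∈ S, ProperMorphism σ)
    (σseq : ℕ → A → List A) (hmem : ∀ n, σseq n ∈ S)
    (Aseq : ℕ → Set A) (a : A) (x : ℕ → A) (s0 : ℕ)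
    (hgen : GeneratesSAdic σseq Aseq a x)
    (hprim : PrimitiveWith σseq Aseq s0) :
    LinearlyRecurrent x ∧ IsLRSubshift (SubshiftGen x) := by
  classical
  have hne0 : ∀ j (b : A), σseq j b ≠ [] := by
    intro j b hnil
    obtain ⟨l, r, hlr⟩ := hSproper _ (hmem j)
    have := (hlr b).1
    rw [hnil] at this
    simp at this
  have hstar : ∃ K, 1 ≤ K ∧ ∀ u, u ≠ [] → Occurs x u → ∀ i : ℕ,
      ∃ j, i ≤ j ∧ j + u.length ≤ i + K * u.length ∧ OccursAt x u j := by
    by_cases hNP : ∀ B : ℕ, ∃ k, B ≤ (chain σseq 0 (k + 1) a).length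
    · exact sadic_star S hSfin hSproper σseq hmem Aseq a x s0 hgen hprim hNP
    · -- bounded case : x is periodic
      push_neg at hNP
      obtain ⟨B, hB⟩ := hNP
      have hfin : {l : List A | l.length ≤ B}.Finite := List.finite_length_le A B
      have hrep : ∃ w : List A, {k : ℕ | chain σseq 0 (k + 1) a = w}.Infinite := by
        by_contra hcon
        push_neg at hcon
        have hUn : (Set.univ : Set ℕ) ⊆ ⋃ w ∈ {l : List A | l.length ≤ B},
            {k | chain σseq 0 (k + 1) a = w} := by
          intro k _
          exact Set.mem_biUnion (le_of_lt (hB k)) rfl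
        have hfin2 : (Set.univ : Set ℕ).Finite :=
          Set.Finite.subset (Set.Finite.biUnion hfin
            (fun w _ => hcon w)) hUn
        exact Set.infinite_univ hfin2
      obtain ⟨w, hw⟩ := hrep
      have hxw : ∀ m, x m = repSeq w a m := by
        intro m
        obtain ⟨N, hN⟩ := hgen.2 m
        obtain ⟨k, hk, hkN⟩ := hw.exists_gt N
        have hNk : repSeq (chain σseq 0 (k + 1) a) a m = x m := hN k (le_of_lt hkN)
        rw [← hNk, hk]
      have hwne : w ≠ [] := by
        obtain ⟨k, hk⟩ := hw.nonempty
        rw [← hk]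
        exact chain_ne_nil σseq hne0 _ _ _
      have hper : ∀ m, x (m + w.length) = x m := by
        intro m
        rw [hxw (m + w.length), hxw m, repSeq, repSeq, Nat.add_mod_right]
      exact ⟨2 * w.length + 1, by omega,
        periodic_star x w.length (List.length_pos_iff.2 hwne) hper⟩
  obtain ⟨K, hK1, hstar'⟩ := hstar
  have hLRW := star_to_LRW x K hK1 hstar'
  exact ⟨⟨K, hLRW⟩, LRW_to_subshift x K hLRW⟩

end DurandLR
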